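/- Let m ≥ 1 and r ≥ 1 be integers and let Q_1, …, Q_r be pairwise disjoint sets in a real inner product space, each of size 2m, and set P = Q_1 ∪ ⋯ ∪ Q_r. Then there is a subset Q of P with |Q ∩ Q_i| = m for each i ∈ {1,…,r} such that ‖c(Q) − c(P)‖ ≤ (1/√(2m−1)) · (diam P)/√(2r). -/

import Mathlib

/-- The centroid of a finite point set `S`: `c(S) = (1/|S|)·∑_{p ∈ S} p`. -/
noncomputable def centroid {E : Type*} [AddCommGroup E] [Module ℝ E] (S : Finset E) : E :=
  ((S.card : ℝ))⁻¹ • ∑ p ∈ S, p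

section AuxAll
open Finset

section Aux

set_option linter.unusedSectionVars false

variable {α : Type*} [DecidableEq α]

/-- Number of `(k+1)`-subsets of `T` containing a fixed `p ∈ T`. -/
lemma count_mem_powersetCard (T : Finset α) (k : ℕ) {p : α} (hp : p ∈ T) :
    ((T.powersetCard (k+1)).filter (fun A => p ∈ A)).card
      = (T.card - 1).choose k := by
  rw [← Finset.card_erase_of_mem hp, ← Finset.card_powersetCard]
  apply Finset.card_bij (fun A _ => A.erase p)
  · rintro A hA
    rw [mem_filter, mem_powersetCard] at hA
    rw [mem_powersetCard]
    exact ⟨erase_subset_erase _ hA.1.1, by rw [card_erase_of_mem hA.2, hA.1.2]; rfl⟩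
  · rintro A hA B hB h
    rw [mem_filter] at hA hB
    rw [← insert_erase hA.2, ← insert_erase hB.2, h]
  · rintro B hB
    rw [mem_powersetCard] at hB
    have hpB : p ∉ B := fun h => (mem_erase.1 (hB.1 h)).1 rfl
    refine ⟨insert p B, ?_, ?_⟩
    · rw [mem_filter, mem_powersetCard]
      exact ⟨⟨insert_subset hp (hB.1.trans (erase_subset _ _)), by
        rw [card_insert_of_notMem hpB, hB.2]⟩, mem_insert_self _ _⟩
    · rw [erase_insert hpB]

lemma count_pair_powersetCard (T : Finset α) (m : ℕ) (hm : 1 ≤ m) {p q : α}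
    (hp : p ∈ T) (hq : q ∈ T) (hpq : p ≠ q) :
    ((T.powersetCard m).filter (fun A => p ∈ A ∧ q ∈ A)).card + (T.card - 2).choose (m-1)
      = (T.card - 1).choose (m-1) := by
  have hT2 : 2 ≤ T.card := Finset.one_lt_card.2 ⟨p, hp, q, hq, hpq⟩
  obtain rfl | hm2 : m = 1 ∨ 2 ≤ m := by omega
  · have : ((T.powersetCard 1).filter (fun A => p ∈ A ∧ q ∈ A)) = ∅ := by
      rw [Finset.eq_empty_iff_forall_notMem]
      rintro A hA
      rw [mem_filter, mem_powersetCard] at hA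
      have := Finset.one_lt_card.2 ⟨p, hA.2.1, q, hA.2.2, hpq⟩
      omega
    simp [this]
  · obtain ⟨k, rfl⟩ : ∃ k, m = k + 2 := ⟨m - 2, by omega⟩
    have hcard : ((T.powersetCard (k+2)).filter (fun A => p ∈ A ∧ q ∈ A)).card
        = (T.card - 2).choose k := by
      have h1 : ((T.erase p).erase q).card = T.card - 2 := by
        rw [card_erase_of_mem (mem_erase.2 ⟨hpq.symm, hq⟩), card_erase_of_mem hp]; omega
      rw [← h1, ← Finset.card_powersetCard]
      apply Finset.card_bij (fun A _ => (A.erase p).erase q)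
      · rintro A hA
        rw [mem_filter, mem_powersetCard] at hA
        rw [mem_powersetCard]
        refine ⟨erase_subset_erase _ (erase_subset_erase _ hA.1.1), ?_⟩
        rw [card_erase_of_mem (mem_erase.2 ⟨hpq.symm, hA.2.2⟩), card_erase_of_mem hA.2.1,
          hA.1.2]; omega
      · rintro A hA B hB h
        rw [mem_filter] at hA hB
        have := congrArg (insert p ∘ insert q) h
        simpa [Function.comp, insert_erase (mem_erase.2 ⟨hpq.symm, hA.2.2⟩),
          insert_erase hA.2.1, insert_erase (mem_erase.2 ⟨hpq.symm, hB.2.2⟩),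
          insert_erase hB.2.1] using this
      · rintro B hB
        rw [mem_powersetCard] at hB
        have hpB : p ∉ B := fun h => by
          have := hB.1 h; rw [mem_erase, mem_erase] at this; exact this.2.1 rfl
        have hqB : q ∉ B := fun h => (mem_erase.1 (hB.1 h)).1 rfl
        refine ⟨insert p (insert q B), ?_, ?_⟩
        · rw [mem_filter, mem_powersetCard]
          have hsub : insert p (insert q B) ⊆ T := by
            refine insert_subset hp (insert_subset hq ?_)
            exact (hB.1.trans ((erase_subset _ _).trans (erase_subset _ _)))
          have hc : (insert p (insert q B)).card = k + 2 := by
            rw [card_insert_of_notMem (by simp [hpq, hpB]),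
              card_insert_of_notMem hqB, hB.2]
          exact ⟨⟨hsub, hc⟩, mem_insert_self _ _, mem_insert_of_mem (mem_insert_self _ _)⟩
        · rw [erase_insert (by simp [hpq, hpB] : p ∉ insert q B), erase_insert hqB]
    rw [hcard]
    obtain ⟨n, hn⟩ : ∃ n, T.card = n + 2 := ⟨T.card - 2, by omega⟩
    rw [hn]
    simp only [Nat.add_sub_cancel, show n + 2 - 1 = n + 1 by omega, show k + 2 - 1 = k + 1 by omega]
    rw [Nat.choose_succ_succ]

end Aux

section Marg

variable {ι : Type*} [Fintype ι] [DecidableEq ι] {α : ι → Type*} [∀ i, DecidableEq (α i)]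
  {M : Type*} [AddCommMonoid M]

lemma sum_piFinset_apply (t : ∀ i, Finset (α i)) (i : ι) (g : α i → M) :
    ∑ f ∈ Fintype.piFinset t, g (f i)
      = (∏ j ∈ Finset.univ.erase i, (t j).card) • ∑ a ∈ t i, g a := by
  rw [← Finset.sum_fiberwise_of_maps_to (g := fun f => f i) (t := t i)
      (fun f hf => (Fintype.mem_piFinset.1 hf) i) (fun f => g (f i)), smul_sum]
  refine Finset.sum_congr rfl fun a ha => ?_
  have : ∀ f ∈ (Fintype.piFinset t).filter (fun f => f i = a), g (f i) = g a := by
    intro f hf; rw [(Finset.mem_filter.1 hf).2]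
  rw [Finset.sum_congr rfl this, Finset.sum_const,
    Fintype.card_filter_piFinset_eq_of_mem t i ha]

lemma sum_piFinset_fiber_eq_zero (t : ∀ i, Finset (α i)) {i j : ι} (hij : i ≠ j)
    {b : α j} (hb : b ∈ t j) (g : α i → M) (hg : ∑ a ∈ t i, g a = 0) :
    ∑ f ∈ (Fintype.piFinset t).filter (fun f => f j = b), g (f i) = 0 := by
  rw [← Fintype.piFinset_update_singleton_eq_filter_piFinset_eq t j hb,
    sum_piFinset_apply]
  rw [Function.update_of_ne hij ({b} : Finset (α j)) t, hg, smul_zero]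

end Marg

lemma choose_ratio (m : ℕ) (hm : 1 ≤ m) :
    ((2*m-2).choose (m-1)) * (2*m) * (2*m-1) = (2*m).choose m * (m * m) := by
  obtain ⟨s, rfl⟩ : ∃ s, m = s + 1 := ⟨m - 1, by omega⟩
  have e1 : 2 * (s+1) - 2 = 2*s := by omega
  have e2 : 2 * (s+1) - 1 = 2*s + 1 := by omega
  have e3 : s + 1 - 1 = s := by omega
  rw [e1, e2, e3]
  have h1 := Nat.add_one_mul_choose_eq (2*s) s
  have h2 := Nat.add_one_mul_choose_eq (2*s+1) s
  have hsymm : (2*s+1).choose (s+1) = (2*s+1).choose s := by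
    have := Nat.choose_symm (n := 2*s+1) (k := s+1) (by omega)
    simpa [show 2*s+1 - (s+1) = s by omega] using this.symm
  have h2' : (2*s+2) * (2*s+1).choose s = (2*(s+1)).choose (s+1) * (s+1) := by
    simpa [Nat.succ_eq_add_one, show 2*(s+1) = 2*s+2 by ring] using h2
  have h1' : (2*s+1) * (2*s).choose s = (2*s+1).choose (s+1) * (s+1) := by
    simpa [Nat.succ_eq_add_one] using h1
  calc (2*s).choose s * (2*(s+1)) * (2*s+1)
      = ((2*s+1) * (2*s).choose s) * (2*s+2) := by ring
    _ = ((2*s+1).choose (s+1) * (s+1)) * (2*s+2) := by rw [h1']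
    _ = ((2*s+2) * (2*s+1).choose s) * (s+1) := by rw [hsymm]; ring
    _ = ((2*(s+1)).choose (s+1) * (s+1)) * (s+1) := by rw [h2']
    _ = (2*(s+1)).choose (s+1) * ((s+1) * (s+1)) := by ring

section InnerLemmas

set_option linter.unusedSectionVars false

variable {E : Type*} [NormedAddCommGroup E] [InnerProductSpace ℝ E] [DecidableEq E]

lemma sum_powersetCard_inner (T : Finset E) (m : ℕ) (hm : 1 ≤ m)
    (v : E → E) (hv : ∑ p ∈ T, v p = 0) :
    ∑ A ∈ T.powersetCard m, (inner ℝ (∑ p ∈ A, v p) (∑ p ∈ A, v p) : ℝ)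
      = ((T.card - 2).choose (m-1) : ℝ) * ∑ p ∈ T, (inner ℝ (v p) (v p) : ℝ) := by
  have key : ∀ A ∈ T.powersetCard m, (inner ℝ (∑ p ∈ A, v p) (∑ p ∈ A, v p) : ℝ)
      = ∑ p ∈ T, ∑ q ∈ T, (if p ∈ A ∧ q ∈ A then (inner ℝ (v p) (v q) : ℝ) else 0) := by
    intro A hA
    have hAT : A ⊆ T := (mem_powersetCard.1 hA).1
    have hsub : ∀ (h : E → ℝ), ∑ q ∈ T, (if q ∈ A then h q else 0) = ∑ q ∈ A, h q := by
      intro h; rw [Finset.sum_ite_mem, Finset.inter_eq_right.2 hAT]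
    calc (inner ℝ (∑ p ∈ A, v p) (∑ p ∈ A, v p) : ℝ)
        = ∑ p ∈ A, ∑ q ∈ A, (inner ℝ (v p) (v q) : ℝ) := by
          rw [sum_inner]; exact Finset.sum_congr rfl fun p _ => inner_sum _ _ _
      _ = ∑ p ∈ A, ∑ q ∈ T, (if q ∈ A then (inner ℝ (v p) (v q) : ℝ) else 0) := by
          exact Finset.sum_congr rfl fun p _ => (hsub _).symm
      _ = ∑ p ∈ T, (if p ∈ A then ∑ q ∈ T, (if q ∈ A then (inner ℝ (v p) (v q) : ℝ) else 0)
            else 0) := (hsub _).symm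
      _ = ∑ p ∈ T, ∑ q ∈ T, (if p ∈ A ∧ q ∈ A then (inner ℝ (v p) (v q) : ℝ) else 0) := by
          refine Finset.sum_congr rfl fun p _ => ?_
          by_cases hp : p ∈ A <;> simp [hp]
  rw [Finset.sum_congr rfl key, Finset.sum_comm]
  have swap2 : ∀ p ∈ T, ∑ A ∈ T.powersetCard m, ∑ q ∈ T,
      (if p ∈ A ∧ q ∈ A then (inner ℝ (v p) (v q) : ℝ) else 0)
      = ∑ q ∈ T, ∑ A ∈ T.powersetCard m,
      (if p ∈ A ∧ q ∈ A then (inner ℝ (v p) (v q) : ℝ) else 0) := fun p _ => Finset.sum_comm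
  rw [Finset.sum_congr rfl swap2]
  have hcount : ∀ p ∈ T, ∀ q ∈ T, ∑ A ∈ T.powersetCard m,
      (if p ∈ A ∧ q ∈ A then (inner ℝ (v p) (v q) : ℝ) else 0)
      = (((T.powersetCard m).filter (fun A => p ∈ A ∧ q ∈ A)).card : ℝ)
          * (inner ℝ (v p) (v q) : ℝ) := by
    intro p _ q _
    rw [← Finset.sum_filter, Finset.sum_const, nsmul_eq_mul]
  refine Eq.trans (Finset.sum_congr rfl fun p hp =>
    Finset.sum_congr rfl fun q hq => hcount p hp q hq) ?_
  obtain ⟨k, rfl⟩ : ∃ k, m = k + 1 := ⟨m - 1, by omega⟩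
  set C1 : ℝ := ((T.card - 1).choose k : ℝ) with hC1
  set C2 : ℝ := ((T.card - 2).choose k : ℝ) with hC2
  have hdiag : ∀ p ∈ T, (((T.powersetCard (k+1)).filter (fun A => p ∈ A ∧ p ∈ A)).card : ℝ)
      = C1 := by
    intro p hp
    simp only [and_self]
    rw [count_mem_powersetCard T k hp]
  have hoff : ∀ p ∈ T, ∀ q ∈ T, p ≠ q →
      (((T.powersetCard (k+1)).filter (fun A => p ∈ A ∧ q ∈ A)).card : ℝ) = C1 - C2 := by
    intro p hp q hq hpq
    have := count_pair_powersetCard T (k+1) (by omega) hp hq hpq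
    simp only [Nat.add_sub_cancel] at this
    have h2 : (((T.powersetCard (k+1)).filter (fun A => p ∈ A ∧ q ∈ A)).card : ℝ)
        + ((T.card - 2).choose k : ℝ) = ((T.card - 1).choose k : ℝ) := by exact_mod_cast this
    rw [hC1, hC2]
    linarith
  simp only [Nat.add_sub_cancel]
  calc ∑ p ∈ T, ∑ q ∈ T, (((T.powersetCard (k+1)).filter
          (fun A => p ∈ A ∧ q ∈ A)).card : ℝ) * (inner ℝ (v p) (v q) : ℝ)
      = ∑ p ∈ T, (C2 * (inner ℝ (v p) (v p) : ℝ)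
          + (C1 - C2) * ∑ q ∈ T, (inner ℝ (v p) (v q) : ℝ)) := by
        refine Finset.sum_congr rfl fun p hp => ?_
        rw [← Finset.add_sum_erase _ _ hp, hdiag p hp]
        have herase : ∑ q ∈ T.erase p, (((T.powersetCard (k+1)).filter
            (fun A => p ∈ A ∧ q ∈ A)).card : ℝ) * (inner ℝ (v p) (v q) : ℝ)
            = (C1 - C2) * ∑ q ∈ T.erase p, (inner ℝ (v p) (v q) : ℝ) := by
          rw [Finset.mul_sum]
          refine Finset.sum_congr rfl fun q hq => ?_
          rw [hoff p hp q (Finset.mem_of_mem_erase hq) (fun h => (Finset.mem_erase.1 hq).1 h.symm)]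
        rw [herase, ← Finset.add_sum_erase _ (fun q => (inner ℝ (v p) (v q) : ℝ)) hp]
        ring
      _ = C2 * ∑ p ∈ T, (inner ℝ (v p) (v p) : ℝ) := by
        have hz : ∀ p ∈ T, ∑ q ∈ T, (inner ℝ (v p) (v q) : ℝ) = 0 := by
          intro p _; rw [← inner_sum, hv, inner_zero_right]
        rw [Finset.mul_sum]
        refine Finset.sum_congr rfl fun p hp => ?_
        rw [hz p hp]; ring

lemma sum_powersetCard_sum_eq_zero (T : Finset E) (m : ℕ) (hm : 1 ≤ m)
    (w : E → E) (hw : ∑ p ∈ T, w p = 0) :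
    ∑ A ∈ T.powersetCard m, ∑ p ∈ A, w p = 0 := by
  obtain ⟨k, rfl⟩ : ∃ k, m = k + 1 := ⟨m - 1, by omega⟩
  have step1 : ∀ A ∈ T.powersetCard (k+1), ∑ p ∈ A, w p
      = ∑ p ∈ T, (if p ∈ A then w p else 0) := by
    intro A hA
    rw [Finset.sum_ite_mem, Finset.inter_eq_right.2 (mem_powersetCard.1 hA).1]
  rw [Finset.sum_congr rfl step1, Finset.sum_comm]
  have step2 : ∀ p ∈ T, ∑ A ∈ T.powersetCard (k+1), (if p ∈ A then w p else 0)
      = ((T.card - 1).choose k : ℕ) • w p := by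
    intro p hp
    rw [← Finset.sum_filter, Finset.sum_const, count_mem_powersetCard T k hp]
  rw [Finset.sum_congr rfl step2, ← Finset.smul_sum, hw, smul_zero]

lemma centroid_sub_sum (T : Finset E) (hT : T.Nonempty) :
    ∑ p ∈ T, (p - centroid T) = 0 := by
  have h0 : (T.card : ℝ) ≠ 0 := by
    simp [Finset.card_ne_zero_of_mem hT.choose_spec]
  rw [Finset.sum_sub_distrib, Finset.sum_const, sub_eq_zero, ← Nat.cast_smul_eq_nsmul ℝ]
  simp only [_root_.centroid]
  rw [smul_smul, mul_inv_cancel₀ h0, one_smul]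

lemma centroid_diff_eq (T A : Finset E) (hAne : A.Nonempty) :
    centroid A - centroid T = ((A.card : ℝ))⁻¹ • ∑ p ∈ A, (p - centroid T) := by
  have h0 : (A.card : ℝ) ≠ 0 := by
    simp [Finset.card_ne_zero_of_mem hAne.choose_spec]
  rw [Finset.sum_sub_distrib, smul_sub, Finset.sum_const, ← Nat.cast_smul_eq_nsmul ℝ,
    smul_smul, inv_mul_cancel₀ h0, one_smul]
  simp only [_root_.centroid]

lemma variance_bound (T : Finset E) (hT : T.Nonempty) (D : ℝ)
    (hD : ∀ p ∈ T, ∀ q ∈ T, dist p q ≤ D) :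
    ∑ p ∈ T, ‖p - centroid T‖^2 ≤ ((T.card : ℝ) - 1) * D^2 / 2 := by
  set c := centroid T with hc
  set v : E → E := fun p => p - c with hvdef
  have hv : ∑ p ∈ T, v p = 0 := centroid_sub_sum T hT
  have hD0 : 0 ≤ D := le_trans dist_nonneg (hD _ hT.choose_spec _ hT.choose_spec)
  set S : ℝ := ∑ p ∈ T, ‖v p‖^2 with hS
  have hid : ∑ p ∈ T, ∑ q ∈ T, ‖p - q‖^2 = 2 * (T.card : ℝ) * S := by
    have hper : ∀ p ∈ T, ∑ q ∈ T, ‖p - q‖^2 = (T.card : ℝ) * ‖v p‖^2 + S := by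
      intro p _
      have : ∀ q ∈ T, ‖p - q‖^2 = ‖v p‖^2 + ‖v q‖^2 - 2 * (inner ℝ (v p) (v q) : ℝ) := by
        intro q _
        have hpq : p - q = v p - v q := by simp [hvdef]
        rw [hpq, norm_sub_sq_real]; ring
      rw [Finset.sum_congr rfl this]
      have hz : ∑ q ∈ T, (inner ℝ (v p) (v q) : ℝ) = 0 := by
        rw [← inner_sum, hv, inner_zero_right]
      rw [Finset.sum_sub_distrib, Finset.sum_add_distrib, Finset.sum_const, ← Finset.mul_sum,
        hz, nsmul_eq_mul]
      ring
    rw [Finset.sum_congr rfl hper, Finset.sum_add_distrib, Finset.sum_const, ← Finset.mul_sum,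
      nsmul_eq_mul]
    ring
  have hbound : ∑ p ∈ T, ∑ q ∈ T, ‖p - q‖^2
      ≤ (T.card : ℝ) * (((T.card : ℝ) - 1) * D^2) := by
    have hper : ∀ p ∈ T, ∑ q ∈ T, ‖p - q‖^2 ≤ ((T.card : ℝ) - 1) * D^2 := by
      intro p hp
      have hle : ∀ q ∈ T, ‖p - q‖^2 ≤ (if p = q then 0 else D^2) := by
        intro q hq
        by_cases h : p = q
        · simp [h]
        · simp only [h, if_false]
          have := hD p hp q hq
          rw [dist_eq_norm] at this
          exact pow_le_pow_left₀ (norm_nonneg _) this 2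
      refine le_trans (Finset.sum_le_sum hle) ?_
      rw [← Finset.add_sum_erase _ _ hp, if_pos rfl, zero_add]
      have : ∀ q ∈ T.erase p, (if p = q then (0:ℝ) else D^2) = D^2 := by
        intro q hq
        rw [if_neg (fun h => (Finset.mem_erase.1 hq).1 h.symm)]
      rw [Finset.sum_congr rfl this, Finset.sum_const, nsmul_eq_mul,
        Finset.card_erase_of_mem hp]
      have h1 : 1 ≤ T.card := Finset.card_pos.2 hT
      have : ((T.card - 1 : ℕ) : ℝ) = (T.card : ℝ) - 1 := by
        push_cast [h1]; ring
      rw [this]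
    calc ∑ p ∈ T, ∑ q ∈ T, ‖p - q‖^2 ≤ ∑ _p ∈ T, ((T.card : ℝ) - 1) * D^2 :=
          Finset.sum_le_sum hper
      _ = (T.card : ℝ) * (((T.card : ℝ) - 1) * D^2) := by
          rw [Finset.sum_const, nsmul_eq_mul]
  have hcard : (0:ℝ) < T.card := by exact_mod_cast Finset.card_pos.2 hT
  rw [hid] at hbound
  nlinarith [hbound, hcard]

/-- Per-block second moment bound. -/
lemma block_bound (T : Finset E) (m : ℕ) (hm : 1 ≤ m) (hT : T.card = 2*m) (D : ℝ)
    (hD : ∀ p ∈ T, ∀ q ∈ T, dist p q ≤ D) :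
    ∑ A ∈ T.powersetCard m, (inner ℝ (centroid A - centroid T) (centroid A - centroid T) : ℝ)
      ≤ ((2*m).choose m : ℝ) * D^2 / (4*(m:ℝ)) := by
  have hTne : T.Nonempty := Finset.card_pos.1 (by omega)
  have hm0 : (0:ℝ) < m := by exact_mod_cast hm
  set v : E → E := fun p => p - centroid T with hv
  have hvz : ∑ p ∈ T, v p = 0 := centroid_sub_sum T hTne
  have hstep : ∀ A ∈ T.powersetCard m,
      (inner ℝ (centroid A - centroid T) (centroid A - centroid T) : ℝ)
      = ((m:ℝ)⁻¹)^2 * (inner ℝ (∑ p ∈ A, v p) (∑ p ∈ A, v p) : ℝ) := by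
    intro A hA
    obtain ⟨hAT, hAc⟩ := mem_powersetCard.1 hA
    have hAne : A.Nonempty := Finset.card_pos.1 (by omega)
    rw [centroid_diff_eq T A hAne, hAc, real_inner_smul_left, real_inner_smul_right]
    ring
  rw [Finset.sum_congr rfl hstep, ← Finset.mul_sum,
    sum_powersetCard_inner T m hm v hvz, hT]
  have hsum : ∑ p ∈ T, (inner ℝ (v p) (v p) : ℝ) = ∑ p ∈ T, ‖v p‖^2 :=
    Finset.sum_congr rfl fun p _ => real_inner_self_eq_norm_sq _
  rw [hsum]
  have hvar : ∑ p ∈ T, ‖v p‖^2 ≤ ((2*(m:ℝ)) - 1) * D^2 / 2 := by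
    have := variance_bound T hTne D hD
    rw [hT] at this
    simpa using this
  have hvnn : (0:ℝ) ≤ ∑ p ∈ T, ‖v p‖^2 :=
    Finset.sum_nonneg fun p _ => sq_nonneg _
  have hC2nn : (0:ℝ) ≤ ((2*m-2).choose (m-1) : ℝ) := by positivity
  have hratio : ((2*m-2).choose (m-1) : ℝ) * (2*(m:ℝ)) * (2*(m:ℝ)-1)
      = ((2*m).choose m : ℝ) * ((m:ℝ) * (m:ℝ)) := by
    have := choose_ratio m hm
    have hc : ((2*m-1 : ℕ) : ℝ) = 2*(m:ℝ) - 1 := by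
      have : 1 ≤ 2*m := by omega
      push_cast [this]; ring
    calc ((2*m-2).choose (m-1) : ℝ) * (2*(m:ℝ)) * (2*(m:ℝ)-1)
        = (((2*m-2).choose (m-1) * (2*m) * (2*m-1) : ℕ) : ℝ) := by
          push_cast [hc]; ring
      _ = (((2*m).choose m * (m * m) : ℕ) : ℝ) := by rw [choose_ratio m hm]
      _ = ((2*m).choose m : ℝ) * ((m:ℝ) * (m:ℝ)) := by push_cast; ring
  calc ((m:ℝ)⁻¹)^2 * (((2*m-2).choose (m-1) : ℝ) * ∑ p ∈ T, ‖v p‖^2)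
      ≤ ((m:ℝ)⁻¹)^2 * (((2*m-2).choose (m-1) : ℝ) * (((2*(m:ℝ)) - 1) * D^2 / 2)) := by
        apply mul_le_mul_of_nonneg_left _ (by positivity)
        exact mul_le_mul_of_nonneg_left hvar hC2nn
    _ = ((2*m).choose m : ℝ) * D^2 / (4*(m:ℝ)) := by
        have hm' : (m:ℝ) ≠ 0 := ne_of_gt hm0
        field_simp
        nlinarith [hratio]

/-- Per-block zero-sum. -/
lemma block_zero (T : Finset E) (m : ℕ) (hm : 1 ≤ m) :
    ∑ A ∈ T.powersetCard m, (centroid A - centroid T) = 0 := by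
  rcases T.eq_empty_or_nonempty with rfl | hTne
  · rcases Nat.eq_zero_or_pos m with rfl | hmp
    · omega
    · rw [Finset.powersetCard_eq_empty.2 (by simp; omega)]
      simp
  have hstep : ∀ A ∈ T.powersetCard m, centroid A - centroid T
      = ((m:ℝ))⁻¹ • ∑ p ∈ A, (p - centroid T) := by
    intro A hA
    obtain ⟨hAT, hAc⟩ := mem_powersetCard.1 hA
    have hAne : A.Nonempty := Finset.card_pos.1 (by omega)
    rw [centroid_diff_eq T A hAne, hAc]
  rw [Finset.sum_congr rfl hstep, ← Finset.smul_sum,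
    sum_powersetCard_sum_eq_zero T m hm _ (centroid_sub_sum T hTne), smul_zero]

end InnerLemmas
end AuxAll


/-- **Halving lemma** (Adiprasito, Bárány, Mustafa). For pairwise disjoint `2m`-point
sets `Q_1, …, Q_r` in a real inner product space with union `P`, there is a subset `Q`
of `P` sharing exactly `m` points with each `Q_i` such that
`‖c(Q) − c(P)‖ ≤ (1/√(2m−1)) · (diam P)/√(2r)`. -/
theorem halving_centroid_lemma
    {E : Type*} [NormedAddCommGroup E] [InnerProductSpace ℝ E] [DecidableEq E]
    (m r : ℕ) (hm : 1 ≤ m) (hr : 1 ≤ r)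
    (Q : Fin r → Finset E) (hcard : ∀ i, (Q i).card = 2 * m)
    (hdisj : ∀ i i', i ≠ i' → Disjoint (Q i) (Q i')) :
    ∃ S : Finset E,
      S ⊆ Finset.univ.biUnion Q ∧
      (∀ i, (S ∩ Q i).card = m) ∧
      ‖centroid S - centroid (Finset.univ.biUnion Q)‖ ≤
        1 / Real.sqrt (2 * (m : ℝ) - 1) *
          (Metric.diam (↑(Finset.univ.biUnion Q) : Set E) / Real.sqrt (2 * (r : ℝ))) := by
    classical
  set P : Finset E := Finset.univ.biUnion Q with hPdef
  set D : ℝ := Metric.diam (↑P : Set E) with hDdef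
  have hD0 : 0 ≤ D := Metric.diam_nonneg
  have hQsub : ∀ i, Q i ⊆ P := fun i x hx => Finset.mem_biUnion.2 ⟨i, Finset.mem_univ i, hx⟩
  have hDle : ∀ i, ∀ p ∈ Q i, ∀ q ∈ Q i, dist p q ≤ D := fun i p hp q hq =>
    Metric.dist_le_diam_of_mem (P.finite_toSet.isBounded) (hQsub i hp) (hQsub i hq)
  have hm0 : (0:ℝ) < m := by exact_mod_cast hm
  have hm1 : (1:ℝ) ≤ (m:ℝ) := by exact_mod_cast hm
  have hr1 : (1:ℝ) ≤ (r:ℝ) := by exact_mod_cast hr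
  have hr0 : (0:ℝ) < r := by exact_mod_cast hr
  set N : ℕ := (2*m).choose m with hNdef
  set t : Fin r → Finset (Finset E) := fun i => (Q i).powersetCard m with htdef
  have htcard : ∀ i, (t i).card = N := fun i => by
    rw [htdef]; rw [Finset.card_powersetCard, hcard i]
  have htne : ∀ i, (t i).Nonempty := fun i =>
    Finset.powersetCard_nonempty.2 (by rw [hcard i]; omega)
  set F : Finset (Fin r → Finset E) := Fintype.piFinset t with hFdef
  have hFne : F.Nonempty := ⟨fun i => (htne i).choose,
    Fintype.mem_piFinset.2 fun i => (htne i).choose_spec⟩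
  set d : Fin r → Finset E → E := fun i A => centroid A - centroid (Q i) with hddef
  have hdzero : ∀ i, ∑ A ∈ t i, d i A = 0 := fun i => block_zero (Q i) m hm
  have hdsq : ∀ i, ∑ A ∈ t i, (inner ℝ (d i A) (d i A) : ℝ) ≤ (N:ℝ) * D^2 / (4*(m:ℝ)) :=
    fun i => block_bound (Q i) m hm (hcard i) D (hDle i)
  have hfmem : ∀ f ∈ F, ∀ i, f i ∈ (Q i).powersetCard m :=
    fun f hf i => Fintype.mem_piFinset.1 hf i
  have hfsub : ∀ f ∈ F, ∀ i, f i ⊆ Q i :=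
    fun f hf i => (Finset.mem_powersetCard.1 (hfmem f hf i)).1
  have hfc : ∀ f ∈ F, ∀ i, (f i).card = m :=
    fun f hf i => (Finset.mem_powersetCard.1 (hfmem f hf i)).2
  -- centroid decomposition
  have hdecomp : ∀ f ∈ F, centroid (Finset.univ.biUnion (fun i => f i)) - centroid P
      = (r:ℝ)⁻¹ • ∑ i, d i (f i) := by
    intro f hf
    have hdisjf : ∀ i ∈ (Finset.univ : Finset (Fin r)), ∀ j ∈ Finset.univ, i ≠ j →
        Disjoint (f i) (f j) := fun i _ j _ hij =>
      (hdisj i j hij).mono (hfsub f hf i) (hfsub f hf j)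
    have hdisjQ : ∀ i ∈ (Finset.univ : Finset (Fin r)), ∀ j ∈ Finset.univ, i ≠ j →
        Disjoint (Q i) (Q j) := fun i _ j _ hij => hdisj i j hij
    have hSsum : ∑ p ∈ Finset.univ.biUnion (fun i => f i), p = ∑ i, ∑ p ∈ f i, p :=
      Finset.sum_biUnion hdisjf
    have hScard : (Finset.univ.biUnion (fun i => f i)).card = r * m := by
      rw [Finset.card_biUnion hdisjf]
      rw [Finset.sum_congr rfl (fun i _ => hfc f hf i), Finset.sum_const, Finset.card_univ,
        Fintype.card_fin, smul_eq_mul]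
    have hPsum : ∑ p ∈ P, p = ∑ i, ∑ p ∈ Q i, p := Finset.sum_biUnion hdisjQ
    have hPcard : P.card = r * (2*m) := by
      rw [hPdef, Finset.card_biUnion hdisjQ]
      rw [Finset.sum_congr rfl (fun i _ => hcard i), Finset.sum_const, Finset.card_univ,
        Fintype.card_fin, smul_eq_mul]
    have hcfi : ∀ i, centroid (f i) = ((m:ℝ))⁻¹ • ∑ p ∈ f i, p := fun i => by
      simp only [centroid, hfc f hf i]
    have hcQi : ∀ i, centroid (Q i) = (((2*m : ℕ)):ℝ)⁻¹ • ∑ p ∈ Q i, p := fun i => by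
      simp only [centroid, hcard i]
    have hrhs : ∑ i, d i (f i)
        = ((m:ℝ))⁻¹ • ∑ i, ∑ p ∈ f i, p - (((2*m:ℕ)):ℝ)⁻¹ • ∑ i, ∑ p ∈ Q i, p := by
      rw [hddef]
      simp only []
      rw [Finset.sum_sub_distrib, Finset.sum_congr rfl (fun i _ => hcfi i),
        Finset.sum_congr rfl (fun i _ => hcQi i), ← Finset.smul_sum, ← Finset.smul_sum]
    rw [hrhs]
    simp only [centroid, hSsum, hScard, hPsum, hPcard]
    rw [smul_sub, smul_smul, smul_smul]
    push_cast
    rw [← mul_inv, ← mul_inv]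
  have hnormsq : ∀ f ∈ F, ‖centroid (Finset.univ.biUnion (fun i => f i)) - centroid P‖^2
      = ((r:ℝ)⁻¹)^2 * (inner ℝ (∑ i, d i (f i)) (∑ i, d i (f i)) : ℝ) := by
    intro f hf
    rw [hdecomp f hf, norm_smul, mul_pow, Real.norm_eq_abs, sq_abs,
      real_inner_self_eq_norm_sq]
  -- total second moment bound
  have hsum1 : ∑ f ∈ F, (inner ℝ (∑ i, d i (f i)) (∑ i, d i (f i)) : ℝ)
      ≤ (r:ℝ) * ((N:ℝ)^(r-1) * ((N:ℝ) * D^2 / (4*(m:ℝ)))) := by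
    have hexp : ∀ f ∈ F, (inner ℝ (∑ i, d i (f i)) (∑ i, d i (f i)) : ℝ)
        = ∑ i, ∑ j, (inner ℝ (d i (f i)) (d j (f j)) : ℝ) := by
      intro f _
      rw [sum_inner]
      exact Finset.sum_congr rfl fun i _ => inner_sum _ _ _
    rw [Finset.sum_congr rfl hexp, Finset.sum_comm]
    have hswap : ∀ i ∈ (Finset.univ : Finset (Fin r)),
        ∑ f ∈ F, ∑ j, (inner ℝ (d i (f i)) (d j (f j)) : ℝ)
        = ∑ j, ∑ f ∈ F, (inner ℝ (d i (f i)) (d j (f j)) : ℝ) := fun i _ => Finset.sum_comm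
    rw [Finset.sum_congr rfl hswap]
    have hij : ∀ i j : Fin r, i ≠ j →
        ∑ f ∈ F, (inner ℝ (d i (f i)) (d j (f j)) : ℝ) = 0 := by
      intro i j hijne
      rw [hFdef, ← Finset.sum_fiberwise_of_maps_to (g := fun f : Fin r → Finset E => f j) (t := t j)
        (fun f hf => Fintype.mem_piFinset.1 hf j)
        (fun f => (inner ℝ (d i (f i)) (d j (f j)) : ℝ))]
      refine Finset.sum_eq_zero fun b hb => ?_
      have h1 : ∀ g ∈ (Fintype.piFinset t).filter (fun f => f j = b),
          (inner ℝ (d i (g i)) (d j (g j)) : ℝ) = (inner ℝ (d i (g i)) (d j b) : ℝ) := by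
        intro g hg; rw [(Finset.mem_filter.1 hg).2]
      rw [Finset.sum_congr rfl h1, ← sum_inner,
        sum_piFinset_fiber_eq_zero t hijne hb (fun A => d i A) (hdzero i), inner_zero_left]
    have hdiagsum : ∀ i ∈ (Finset.univ : Finset (Fin r)),
        ∑ j, ∑ f ∈ F, (inner ℝ (d i (f i)) (d j (f j)) : ℝ)
        = ∑ f ∈ F, (inner ℝ (d i (f i)) (d i (f i)) : ℝ) := by
      intro i _
      exact Finset.sum_eq_single_of_mem i (Finset.mem_univ i)
        (fun j _ hji => hij i j (fun h => hji h.symm))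
    rw [Finset.sum_congr rfl hdiagsum]
    have hii : ∀ i : Fin r, ∑ f ∈ F, (inner ℝ (d i (f i)) (d i (f i)) : ℝ)
        ≤ (N:ℝ)^(r-1) * ((N:ℝ) * D^2 / (4*(m:ℝ))) := by
      intro i
      rw [hFdef, sum_piFinset_apply t i (fun A => (inner ℝ (d i A) (d i A) : ℝ))]
      have hprod : (∏ j ∈ Finset.univ.erase i, (t j).card) = N^(r-1) := by
        rw [Finset.prod_congr rfl (fun j _ => htcard j), Finset.prod_const,
          Finset.card_erase_of_mem (Finset.mem_univ i), Finset.card_univ, Fintype.card_fin]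
      rw [hprod, nsmul_eq_mul]
      push_cast
      exact mul_le_mul_of_nonneg_left (hdsq i) (by positivity)
    refine le_trans (Finset.sum_le_sum fun i _ => hii i) ?_
    rw [Finset.sum_const, Finset.card_univ, Fintype.card_fin, nsmul_eq_mul]
  -- average
  set B : ℝ := D^2 / (4*(m:ℝ)*(r:ℝ)) with hBdef
  have hNpow : (N:ℝ)^(r-1) * (N:ℝ) = (N:ℝ)^r := by
    rw [← pow_succ, Nat.sub_add_cancel hr]
  have hcardF : (F.card : ℝ) = (N:ℝ)^r := by
    rw [hFdef, Fintype.card_piFinset]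
    rw [Finset.prod_congr rfl (fun i _ => htcard i), Finset.prod_const, Finset.card_univ,
      Fintype.card_fin]
    push_cast
    ring
  have havg : ∑ f ∈ F, ‖centroid (Finset.univ.biUnion (fun i => f i)) - centroid P‖^2
      ≤ ∑ _f ∈ F, B := by
    rw [Finset.sum_congr rfl hnormsq, ← Finset.mul_sum, Finset.sum_const, nsmul_eq_mul,
      hcardF]
    refine le_trans (mul_le_mul_of_nonneg_left hsum1 (by positivity)) (le_of_eq ?_)
    rw [hBdef, ← hNpow]
    field_simp
  obtain ⟨f, hfF, hfle⟩ := Finset.exists_le_of_sum_le hFne havg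
  refine ⟨Finset.univ.biUnion (fun i => f i), ?_, ?_, ?_⟩
  · intro x hx
    obtain ⟨i, _, hxi⟩ := Finset.mem_biUnion.1 hx
    exact Finset.mem_biUnion.2 ⟨i, Finset.mem_univ i, hfsub f hfF i hxi⟩
  · intro i
    have hint : (Finset.univ.biUnion (fun i => f i)) ∩ Q i = f i := by
      ext x
      constructor
      · intro hx
        obtain ⟨hxS, hxQ⟩ := Finset.mem_inter.1 hx
        obtain ⟨i', _, hxi'⟩ := Finset.mem_biUnion.1 hxS
        rcases eq_or_ne i' i with rfl | hne
        · exact hxi'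
        · exact absurd hxQ (Finset.disjoint_left.1 (hdisj i' i hne) (hfsub f hfF i' hxi'))
      · intro hx
        exact Finset.mem_inter.2 ⟨Finset.mem_biUnion.2 ⟨i, Finset.mem_univ i, hx⟩,
          hfsub f hfF i hx⟩
    rw [hint, hfc f hfF i]
  · -- numeric conclusion
    have hkey : ‖centroid (Finset.univ.biUnion (fun i => f i)) - centroid P‖^2 ≤ B := hfle
    have hnn := norm_nonneg (centroid (Finset.univ.biUnion (fun i => f i)) - centroid P)
    have h4mr : (0:ℝ) < 4*(m:ℝ)*(r:ℝ) := by positivity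
    have hsqle : ‖centroid (Finset.univ.biUnion (fun i => f i)) - centroid P‖
        ≤ D / Real.sqrt (4*(m:ℝ)*(r:ℝ)) := by
      rw [← Real.sqrt_sq hnn]
      refine le_trans (Real.sqrt_le_sqrt hkey) ?_
      rw [hBdef, Real.sqrt_div (sq_nonneg D), Real.sqrt_sq hD0]
    have ha : (0:ℝ) < 2*(m:ℝ)-1 := by linarith [hm1]
    have hb : (0:ℝ) < 2*(r:ℝ) := by linarith
    have hprodpos : (0:ℝ) < (2*(m:ℝ)-1)*(2*(r:ℝ)) := by positivity
    have hRHS : 1 / Real.sqrt (2*(m:ℝ)-1) * (D / Real.sqrt (2*(r:ℝ)))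
        = D / Real.sqrt ((2*(m:ℝ)-1)*(2*(r:ℝ))) := by
      rw [Real.sqrt_mul (le_of_lt ha), div_mul_div_comm, one_mul]
    rw [hRHS]
    refine le_trans hsqle ?_
    have hle2 : Real.sqrt ((2*(m:ℝ)-1)*(2*(r:ℝ))) ≤ Real.sqrt (4*(m:ℝ)*(r:ℝ)) :=
      Real.sqrt_le_sqrt (by nlinarith [hr0, hm0])
    have hposs : 0 < Real.sqrt ((2*(m:ℝ)-1)*(2*(r:ℝ))) := Real.sqrt_pos.2 hprodpos
    exact div_le_div_of_nonneg_left hD0 hposs hle2
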